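/- Let (G,Γ₁,Γ₂) be a boundary triple for S, and let A, B be bounded linear operators on G with A B* = B A* and M^{A,B} boundedly invertible (a normalized pair), where M^{A,B}(x₁,x₂) = (A x₁ − B x₂, B x₁ + A x₂) on G ⊕ G. Then the operator H^{A,B} is self-adjoint, and for every z in the intersection of the resolvent sets of H⁰ and H^{A,B}, the operators Q(z)B* − A* and BQ(z) − A are boundedly invertible and (H^{A,B} − z)⁻¹ = (H⁰ − z)⁻¹ − γ(z) B* (Q(z) B* − A*)⁻¹ γ(z̄)* = (H⁰ − z)⁻¹ − γ(z) (B Q(z) − A)⁻¹ B γ(z̄)*, where γ(z̄)* : H → G is the adjoint of γ(z̄). -/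

import Mathlib

open ContinuousLinearMap

variable {H : Type*} [NormedAddCommGroup H] [InnerProductSpace ℂ H] [CompleteSpace H]
variable {G : Type*} [NormedAddCommGroup G] [InnerProductSpace ℂ G] [CompleteSpace G]

/-- The operator `M^{A,B}` on `G × G`, `(x₁,x₂) ↦ (A x₁ - B x₂, B x₁ + A x₂)`. -/
noncomputable def MAB (A B : G →L[ℂ] G) : (G × G) →L[ℂ] (G × G) :=
  ((A.comp (fst ℂ G G)) - (B.comp (snd ℂ G G))).prod
    ((B.comp (fst ℂ G G)) + (A.comp (snd ℂ G G)))

/-- A bounded operator is boundedly invertible if it has a bounded two-sided inverse. -/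
def IsBoundedlyInvertible {E F : Type*} [NormedAddCommGroup E] [NormedSpace ℂ E]
    [NormedAddCommGroup F] [NormedSpace ℂ F] (T : E →L[ℂ] F) : Prop :=
  ∃ T' : F →L[ℂ] E, (∀ x, T' (T x) = x) ∧ (∀ y, T (T' y) = y)

/-- A densely defined operator is symmetric if `⟪Sφ, ψ⟫ = ⟪φ, Sψ⟫` on its domain. -/
def IsSymmetricPMap (S : H →ₗ.[ℂ] H) : Prop :=
  ∀ φ ψ : S.domain, (inner ℂ (S φ) (ψ : H) : ℂ) = inner ℂ (φ : H) (S ψ)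

/-- A boundary triple `(G, Γ₁, Γ₂)` for a symmetric operator `S`: two boundary maps
on `dom S*` satisfying the abstract Green identity and joint surjectivity. -/
structure BoundaryTriple (S : H →ₗ.[ℂ] H) (G : Type*) [NormedAddCommGroup G]
    [InnerProductSpace ℂ G] [CompleteSpace G] where
  Γ₁ : S.adjoint.domain →ₗ[ℂ] G
  Γ₂ : S.adjoint.domain →ₗ[ℂ] G
  green : ∀ φ ψ : S.adjoint.domain,
    (inner ℂ (φ : H) (S.adjoint ψ) : ℂ) - inner ℂ (S.adjoint φ) (ψ : H)
      = (inner ℂ (Γ₁ φ) (Γ₂ ψ) : ℂ) - inner ℂ (Γ₂ φ) (Γ₁ ψ)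
  surj : Function.Surjective fun φ : S.adjoint.domain => (Γ₁ φ, Γ₂ φ)

/-- The restriction of a partially defined operator `T` to a submodule `K` of its domain. -/
noncomputable def pmapRestrict (T : H →ₗ.[ℂ] H) (K : Submodule ℂ T.domain) : H →ₗ.[ℂ] H where
  domain := K.map T.domain.subtype
  toFun := (T.toFun.comp K.subtype).comp
    (Submodule.equivMapOfInjective T.domain.subtype
      (Submodule.injective_subtype T.domain) K).symm.toLinearMap

/-- The distinguished extension `H⁰`: the restriction of `S*` to `ker Γ₁`. -/
noncomputable def H0 (S : H →ₗ.[ℂ] H) (BT : BoundaryTriple S G) : H →ₗ.[ℂ] H :=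
  pmapRestrict S.adjoint (LinearMap.ker BT.Γ₁)

/-- The extension `H^{A,B}`: the restriction of `S*` to `{φ : A Γ₁ φ = B Γ₂ φ}`. -/
noncomputable def HAB (S : H →ₗ.[ℂ] H) (BT : BoundaryTriple S G) (A B : G →L[ℂ] G) :
    H →ₗ.[ℂ] H :=
  pmapRestrict S.adjoint
    (LinearMap.ker ((A.toLinearMap.comp BT.Γ₁) - (B.toLinearMap.comp BT.Γ₂)))

/-- `R` is the resolvent of `T` at `z`: a bounded, everywhere defined two-sided inverse
of `T - z`. -/
def IsResolventOf (T : H →ₗ.[ℂ] H) (z : ℂ) (R : H →L[ℂ] H) : Prop :=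
  (∀ f : H, ∃ φ : T.domain, (φ : H) = R f ∧ T φ - z • (φ : H) = f) ∧
  (∀ φ : T.domain, R (T φ - z • (φ : H)) = φ)

/-- `z` is in the resolvent set of `T`. -/
def InResolventSet (T : H →ₗ.[ℂ] H) (z : ℂ) : Prop := ∃ R, IsResolventOf T z R

/-- `γz` is the `Γ`-field at `z`: the inverse of `Γ₁` restricted to the deficiency
space `N_z = ker (S* - z)`. -/
def IsGammaField (S : H →ₗ.[ℂ] H) (BT : BoundaryTriple S G) (z : ℂ) (γz : G →L[ℂ] H) : Prop :=
  (∀ ξ : G, ∃ φ : S.adjoint.domain, (φ : H) = γz ξ ∧ S.adjoint φ = z • (φ : H) ∧ BT.Γ₁ φ = ξ) ∧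
  (∀ φ : S.adjoint.domain, S.adjoint φ = z • (φ : H) → γz (BT.Γ₁ φ) = (φ : H))

/-- `Qz` is the `Q`-function (Weyl function) at `z`: `Qz = Γ₂ ∘ γz`. -/
def IsQFunction (S : H →ₗ.[ℂ] H) (BT : BoundaryTriple S G) (z : ℂ)
    (γz : G →L[ℂ] H) (Qz : G →L[ℂ] G) : Prop :=
  IsGammaField S BT z γz ∧
    ∀ φ : S.adjoint.domain, S.adjoint φ = z • (φ : H) → Qz (BT.Γ₁ φ) = BT.Γ₂ φ

section Aux

set_option linter.unusedSectionVars false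

local notation "⟪" x ", " y "⟫" => @inner ℂ _ _ x y

variable {H : Type*} [NormedAddCommGroup H] [InnerProductSpace ℂ H] [CompleteSpace H]
variable {G : Type*} [NormedAddCommGroup G] [InnerProductSpace ℂ G] [CompleteSpace G]

namespace KreinAux

/-! ### pmapRestrict lemmas -/

variable {T : H →ₗ.[ℂ] H} {K : Submodule ℂ T.domain}

lemma pr_mem (ψ : T.domain) (h : ψ ∈ K) : (ψ : H) ∈ (pmapRestrict T K).domain :=
  Submodule.mem_map_of_mem h

lemma pr_apply (ψ : T.domain) (h : ψ ∈ K) :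
    pmapRestrict T K ⟨(ψ : H), pr_mem ψ h⟩ = T ψ := by
  set e := Submodule.equivMapOfInjective T.domain.subtype
      (Submodule.injective_subtype T.domain) K with he
  have h2 := Submodule.map_equivMapOfInjective_symm_apply T.domain.subtype
      (Submodule.injective_subtype T.domain) K ⟨(ψ : H), pr_mem ψ h⟩
  have h3 : ((e.symm ⟨(ψ : H), pr_mem ψ h⟩ : K) : T.domain) = ψ :=
    Subtype.ext h2
  show T.toFun ((e.symm ⟨(ψ : H), pr_mem ψ h⟩ : K) : T.domain) = T ψ
  rw [h3]; rfl

lemma pr_elim (x : (pmapRestrict T K).domain) :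
    ∃ ψ : T.domain, ψ ∈ K ∧ ((ψ : H) = (x : H)) ∧ T ψ = pmapRestrict T K x := by
  obtain ⟨ψ, hψ, hx⟩ := Submodule.mem_map.mp x.2
  refine ⟨ψ, hψ, hx, ?_⟩
  have hx' : x = ⟨(ψ : H), pr_mem ψ hψ⟩ := Subtype.ext hx.symm
  rw [hx', pr_apply ψ hψ]

/-! ### algebra of normalized pairs -/

variable {A B : G →L[ℂ] G}

open ContinuousLinearMap

lemma MAB_apply (A B : G →L[ℂ] G) (v : G × G) :
    MAB A B v = (A v.1 - B v.2, B v.1 + A v.2) := rfl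

lemma row_surj (hM : IsBoundedlyInvertible (MAB A B)) (η : G) :
    ∃ v : G × G, A v.1 - B v.2 = η := by
  obtain ⟨T', -, hr⟩ := hM
  refine ⟨T' (η, 0), ?_⟩
  have h0 := hr (η, 0)
  rw [MAB_apply] at h0
  exact congrArg Prod.fst h0

lemma apply_adj_inj (hM : IsBoundedlyInvertible (MAB A B)) {u : G}
    (h1 : adjoint A u = 0) (h2 : adjoint B u = 0) : u = 0 := by
  obtain ⟨v, hv⟩ := row_surj hM u
  have h : ⟪u, u⟫ = 0 := by
    nth_rewrite 1 [← hv]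
    rw [inner_sub_left, ← adjoint_inner_right A, ← adjoint_inner_right B, h1, h2]
    simp
  exact inner_self_eq_zero.mp h

/-- `V ⊆ ran L`: if `A x = B y` then `(x, y) = (B* u, A* u)` for some `u`. -/
lemma exists_of_AB (hAB : A ∘L adjoint B = B ∘L adjoint A)
    (hM : IsBoundedlyInvertible (MAB A B)) {x y : G} (h : A x = B y) :
    ∃ u : G, x = adjoint B u ∧ y = adjoint A u := by
  obtain ⟨T', hl, hr⟩ := hM
  set T11 : G →L[ℂ] G := (fst ℂ G G) ∘L T' ∘L (inl ℂ G G) with hT11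
  set T12 : G →L[ℂ] G := (fst ℂ G G) ∘L T' ∘L (inr ℂ G G) with hT12
  set T21 : G →L[ℂ] G := (snd ℂ G G) ∘L T' ∘L (inl ℂ G G) with hT21
  set T22 : G →L[ℂ] G := (snd ℂ G G) ∘L T' ∘L (inr ℂ G G) with hT22
  have hsplit : ∀ a b : G, T' (a, b) = (T11 a + T12 b, T21 a + T22 b) := by
    intro a b
    have hab : (a, b) = ((a, 0) : G × G) + (0, b) := by simp
    rw [hab, map_add]
    have e1 : T' (a, 0) = (T11 a, T21 a) := rfl
    have e2 : T' (0, b) = (T12 b, T22 b) := rfl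
    rw [e1, e2]
    rfl
  have key : ∀ a b : G, (T11 (A a - B b) + T12 (B a + A b),
      T21 (A a - B b) + T22 (B a + A b)) = (a, b) := by
    intro a b
    rw [← hsplit]
    have h0 := hl (a, b)
    rw [MAB_apply] at h0
    exact h0
  have k11 : ∀ a : G, T11 (A a) + T12 (B a) = a := by
    intro a
    have h0 := congrArg Prod.fst (key a 0)
    simpa using h0
  have k21 : ∀ a : G, T21 (A a) + T22 (B a) = 0 := by
    intro a
    have h0 := congrArg Prod.snd (key a 0)
    simpa using h0
  have k12 : ∀ b : G, -T11 (B b) + T12 (A b) = 0 := by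
    intro b
    have h0 := congrArg Prod.fst (key 0 b)
    simpa using h0
  have k22 : ∀ b : G, -T21 (B b) + T22 (A b) = b := by
    intro b
    have h0 := congrArg Prod.snd (key 0 b)
    simpa using h0
  set p : G := adjoint T11 x + adjoint T21 y with hp
  set q : G := adjoint T12 x + adjoint T22 y with hq
  have hA : adjoint A p + adjoint B q = x := by
    apply ext_inner_left ℂ; intro v
    calc ⟪v, adjoint A p + adjoint B q⟫
        = ⟪A v, p⟫ + ⟪B v, q⟫ := by
          rw [inner_add_right, adjoint_inner_right, adjoint_inner_right]
      _ = ⟪T11 (A v) + T12 (B v), x⟫ + ⟪T21 (A v) + T22 (B v), y⟫ := by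
          rw [hp, hq]
          simp only [inner_add_right, adjoint_inner_right, inner_add_left]
          ring
      _ = ⟪v, x⟫ := by rw [k11 v, k21 v]; simp
  have hB : -(adjoint B p) + adjoint A q = y := by
    apply ext_inner_left ℂ; intro v
    calc ⟪v, -(adjoint B p) + adjoint A q⟫
        = -⟪B v, p⟫ + ⟪A v, q⟫ := by
          rw [inner_add_right, inner_neg_right, adjoint_inner_right, adjoint_inner_right]
      _ = ⟪-T11 (B v) + T12 (A v), x⟫ + ⟪-T21 (B v) + T22 (A v), y⟫ := by
          rw [hp, hq]
          simp only [inner_add_right, adjoint_inner_right, inner_add_left, inner_neg_left]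
          ring
      _ = ⟪v, y⟫ := by rw [k12 v, k22 v]; simp
  have e3 : A (adjoint B q) = B (adjoint A q) := congrFun (congrArg DFunLike.coe hAB) q
  have hps : A (adjoint A p) + B (adjoint B p) = 0 := by
    have e1 : A (adjoint A p) + A (adjoint B q) = A x := by rw [← map_add, hA]
    have e2 : -(B (adjoint B p)) + B (adjoint A q) = B y := by
      rw [← map_neg, ← map_add, hB]
    have e4 : A (adjoint A p) + A (adjoint B q)
        - (-(B (adjoint B p)) + B (adjoint A q)) = 0 := by
      rw [e1, e2, h, sub_self]
    rw [e3] at e4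
    have e5 : A (adjoint A p) + B (adjoint B p)
        = A (adjoint A p) + B (adjoint A q) - (-(B (adjoint B p)) + B (adjoint A q)) := by
      abel
    rw [e5]
    exact e4
  have hp0 : adjoint A p = 0 ∧ adjoint B p = 0 := by
    have h0 : ⟪p, A (adjoint A p) + B (adjoint B p)⟫ = 0 := by rw [hps, inner_zero_right]
    rw [inner_add_right, ← adjoint_inner_left A, ← adjoint_inner_left B,
      inner_self_eq_norm_sq_to_K, inner_self_eq_norm_sq_to_K] at h0
    have hre : ‖adjoint A p‖ ^ 2 + ‖adjoint B p‖ ^ 2 = 0 := by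
      have h1 : ((‖adjoint A p‖ ^ 2 + ‖adjoint B p‖ ^ 2 : ℝ) : ℂ) = 0 := by
        push_cast
        exact h0
      exact_mod_cast h1
    have h4 := (add_eq_zero_iff_of_nonneg (by positivity) (by positivity)).mp hre
    exact ⟨norm_eq_zero.mp ((pow_eq_zero_iff two_ne_zero).mp h4.1),
      norm_eq_zero.mp ((pow_eq_zero_iff two_ne_zero).mp h4.2)⟩
  refine ⟨q, ?_, ?_⟩
  · rw [← hA, hp0.1, zero_add]
  · rw [← hB, hp0.2]; simp

end KreinAux
end Aux
namespace KreinAux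
section BTsec

set_option linter.unusedSectionVars false

local notation "⟪" x ", " y "⟫" => @inner ℂ _ _ x y

open ContinuousLinearMap

variable {H : Type*} [NormedAddCommGroup H] [InnerProductSpace ℂ H] [CompleteSpace H]
variable {G : Type*} [NormedAddCommGroup G] [InnerProductSpace ℂ G] [CompleteSpace G]
variable {S : H →ₗ.[ℂ] H} {BT : BoundaryTriple S G} {A B : G →L[ℂ] G}

lemma inner_self_add_eq_zero {a b : G} (h : ⟪a, a⟫ + ⟪b, b⟫ = 0) : a = 0 ∧ b = 0 := by
  rw [inner_self_eq_norm_sq_to_K, inner_self_eq_norm_sq_to_K] at h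
  have hre : ‖a‖ ^ 2 + ‖b‖ ^ 2 = 0 := by
    have h1 : ((‖a‖ ^ 2 + ‖b‖ ^ 2 : ℝ) : ℂ) = 0 := by push_cast; exact h
    exact_mod_cast h1
  have h4 := (add_eq_zero_iff_of_nonneg (by positivity) (by positivity)).mp hre
  exact ⟨norm_eq_zero.mp ((pow_eq_zero_iff two_ne_zero).mp h4.1),
    norm_eq_zero.mp ((pow_eq_zero_iff two_ne_zero).mp h4.2)⟩

lemma dom_lift (hdense : Dense (S.domain : Set H)) (hsymm : IsSymmetricPMap S) (u : S.domain) :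
    ∃ u' : S.adjoint.domain, ((u' : H) = (u : H)) ∧ S.adjoint u' = S u := by
  have hmem : (u : H) ∈ S.adjoint.domain :=
    LinearPMap.mem_adjoint_domain_of_exists _ ⟨S u, fun x => hsymm u x⟩
  exact ⟨⟨(u : H), hmem⟩, rfl, LinearPMap.adjoint_apply_eq hdense _ (fun x => hsymm u x)⟩

lemma adj_inner (hdense : Dense (S.domain : Set H)) (ψ : S.adjoint.domain) (u : S.domain) :
    ⟪(u : H), S.adjoint ψ⟫ = ⟪S u, (ψ : H)⟫ := by
  have h1 := (LinearPMap.adjoint_isFormalAdjoint hdense) ψ u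
  rw [← inner_conj_symm ((u : H)) (S.adjoint ψ), h1, inner_conj_symm]

lemma boundary_zero (hdense : Dense (S.domain : Set H)) (hsymm : IsSymmetricPMap S)
    (u : S.domain) (u' : S.adjoint.domain)
    (h1 : (u' : H) = (u : H)) (h2 : S.adjoint u' = S u) : BT.Γ₁ u' = 0 ∧ BT.Γ₂ u' = 0 := by
  have hg : ∀ ψ : S.adjoint.domain, ⟪BT.Γ₁ u', BT.Γ₂ ψ⟫ - ⟪BT.Γ₂ u', BT.Γ₁ ψ⟫ = 0 := by
    intro ψ
    rw [← BT.green u' ψ, h1, h2, adj_inner hdense ψ u, sub_self]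
  obtain ⟨ψ, hψ⟩ := BT.surj (-(BT.Γ₂ u'), BT.Γ₁ u')
  have h3 := hg ψ
  have e1 : BT.Γ₁ ψ = -(BT.Γ₂ u') := by simpa using congrArg Prod.fst hψ
  have e2 : BT.Γ₂ ψ = BT.Γ₁ u' := by simpa using congrArg Prod.snd hψ
  rw [e1, e2] at h3
  rw [inner_neg_right, sub_neg_eq_add] at h3
  exact inner_self_add_eq_zero h3

/-- Membership in the boundary-condition kernel. -/
lemma mem_KAB_iff {ψ : S.adjoint.domain} :
    ψ ∈ LinearMap.ker ((A.toLinearMap.comp BT.Γ₁) - (B.toLinearMap.comp BT.Γ₂)) ↔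
      A (BT.Γ₁ ψ) = B (BT.Γ₂ ψ) := by
  rw [LinearMap.mem_ker, LinearMap.sub_apply, LinearMap.comp_apply, LinearMap.comp_apply,
    sub_eq_zero]
  exact Iff.rfl

lemma dense_dom_HAB (hdense : Dense (S.domain : Set H)) (hsymm : IsSymmetricPMap S)
    (BT : BoundaryTriple S G) (A B : G →L[ℂ] G) :
    Dense (((HAB S BT A B).domain : Submodule ℂ H) : Set H) := by
  refine Dense.mono ?_ hdense
  intro x hx
  obtain ⟨u', hcoe, happ⟩ := dom_lift hdense hsymm ⟨x, hx⟩
  obtain ⟨hz1, hz2⟩ := boundary_zero (BT := BT) hdense hsymm ⟨x, hx⟩ u' hcoe happ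
  have hm : u' ∈ LinearMap.ker ((A.toLinearMap.comp BT.Γ₁) - (B.toLinearMap.comp BT.Γ₂)) :=
    mem_KAB_iff.mpr (by rw [hz1, hz2, map_zero, map_zero])
  have := pr_mem u' hm
  rw [hcoe] at this
  exact this

lemma green_pair (hAB : A ∘L adjoint B = B ∘L adjoint A)
    (hM : IsBoundedlyInvertible (MAB A B)) {ψ χ : S.adjoint.domain}
    (hψ : A (BT.Γ₁ ψ) = B (BT.Γ₂ ψ)) (hχ : A (BT.Γ₁ χ) = B (BT.Γ₂ χ)) :
    ⟪BT.Γ₁ ψ, BT.Γ₂ χ⟫ = ⟪BT.Γ₂ ψ, BT.Γ₁ χ⟫ := by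
  obtain ⟨u, hu1, hu2⟩ := exists_of_AB hAB hM hψ
  obtain ⟨v, hv1, hv2⟩ := exists_of_AB hAB hM hχ
  have e : A (adjoint B u) = B (adjoint A u) := by
    have := congrFun (congrArg DFunLike.coe hAB) u
    simpa using this
  rw [hu1, hu2, hv1, hv2, adjoint_inner_right, adjoint_inner_right, e]

/-- Green's identity vanishes on pairs satisfying the boundary condition. -/
lemma green_zero (hAB : A ∘L adjoint B = B ∘L adjoint A)
    (hM : IsBoundedlyInvertible (MAB A B)) {ψ χ : S.adjoint.domain}
    (hψ : A (BT.Γ₁ ψ) = B (BT.Γ₂ ψ)) (hχ : A (BT.Γ₁ χ) = B (BT.Γ₂ χ)) :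
    ⟪(ψ : H), S.adjoint χ⟫ = ⟪S.adjoint ψ, (χ : H)⟫ := by
  have hg := BT.green ψ χ
  rw [green_pair hAB hM hψ hχ, sub_self, sub_eq_zero] at hg
  exact hg

/-- Unpack the first clause of a resolvent of `HAB`. -/
lemma res_lift {z : ℂ} {R : H →L[ℂ] H} (h : IsResolventOf (HAB S BT A B) z R) (f : H) :
    ∃ φ : S.adjoint.domain, A (BT.Γ₁ φ) = B (BT.Γ₂ φ) ∧ (φ : H) = R f ∧
      S.adjoint φ - z • (φ : H) = f := by
  obtain ⟨x, hx1, hx2⟩ := h.1 f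
  obtain ⟨ψ, hψK, hcoe, happ⟩ := pr_elim x
  refine ⟨ψ, mem_KAB_iff.mp hψK, by rw [hcoe, hx1], ?_⟩
  rw [happ, hcoe]
  exact hx2

/-- Unpack the second clause of a resolvent of `HAB`. -/
lemma res_inv {z : ℂ} {R : H →L[ℂ] H} (h : IsResolventOf (HAB S BT A B) z R)
    (φ : S.adjoint.domain) (hφ : A (BT.Γ₁ φ) = B (BT.Γ₂ φ)) :
    R (S.adjoint φ - z • (φ : H)) = (φ : H) := by
  have hm : φ ∈ LinearMap.ker ((A.toLinearMap.comp BT.Γ₁) - (B.toLinearMap.comp BT.Γ₂)) :=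
    mem_KAB_iff.mpr hφ
  have h2 := h.2 ⟨(φ : H), pr_mem φ hm⟩
  unfold HAB at h2
  rw [pr_apply φ hm] at h2
  exact h2

lemma H0_eq : H0 S BT = HAB S BT 1 0 := by
  unfold H0 HAB
  congr 1
  ext φ
  rw [LinearMap.mem_ker, mem_KAB_iff]
  simp

end BTsec
end KreinAux
namespace KreinAux
section Main

set_option linter.unusedSectionVars false
set_option maxHeartbeats 1000000

local notation "⟪" x ", " y "⟫" => @inner ℂ _ _ x y

open ContinuousLinearMap

variable {H : Type*} [NormedAddCommGroup H] [InnerProductSpace ℂ H] [CompleteSpace H]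
variable {G : Type*} [NormedAddCommGroup G] [InnerProductSpace ℂ G] [CompleteSpace G]
variable {S : H →ₗ.[ℂ] H} {BT : BoundaryTriple S G} {A B : G →L[ℂ] G}

/-- The key maximality lemma: any vector pair satisfying the defining relation of the
adjoint of `H^{A,B}` already lies in (the graph of) `H^{A,B}`. -/
lemma max_lemma (hdense : Dense (S.domain : Set H)) (hsymm : IsSymmetricPMap S)
    (hAB : A ∘L adjoint B = B ∘L adjoint A) (g h : H)
    (hgh : ∀ ψ : S.adjoint.domain, A (BT.Γ₁ ψ) = B (BT.Γ₂ ψ) →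
      ⟪g, S.adjoint ψ⟫ = ⟪h, (ψ : H)⟫) :
    ∃ φ : S.adjoint.domain, (φ : H) = g ∧ S.adjoint φ = h ∧ A (BT.Γ₁ φ) = B (BT.Γ₂ φ) := by
  have hS : ∀ x : S.domain, ⟪h, (x : H)⟫ = ⟪g, S x⟫ := by
    intro x
    obtain ⟨x', hcoe, happ⟩ := dom_lift hdense hsymm x
    obtain ⟨hz1, hz2⟩ := boundary_zero (BT := BT) hdense hsymm x x' hcoe happ
    have h0 := hgh x' (by rw [hz1, hz2, map_zero, map_zero])
    rw [happ, hcoe] at h0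
    exact h0.symm
  have hmem : g ∈ S.adjoint.domain :=
    LinearPMap.mem_adjoint_domain_of_exists _ ⟨h, hS⟩
  have happ : S.adjoint ⟨g, hmem⟩ = h := LinearPMap.adjoint_apply_eq hdense _ hS
  refine ⟨⟨g, hmem⟩, rfl, happ, ?_⟩
  apply ext_inner_right ℂ
  intro u
  obtain ⟨ψ, hψ⟩ := BT.surj (adjoint B u, adjoint A u)
  have e1 : BT.Γ₁ ψ = adjoint B u := by simpa using congrArg Prod.fst hψ
  have e2 : BT.Γ₂ ψ = adjoint A u := by simpa using congrArg Prod.snd hψ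
  have hcond : A (BT.Γ₁ ψ) = B (BT.Γ₂ ψ) := by
    rw [e1, e2]
    simpa using congrFun (congrArg DFunLike.coe hAB) u
  have hgreen := BT.green ⟨g, hmem⟩ ψ
  have hL : ⟪(g : H), S.adjoint ψ⟫ - ⟪S.adjoint ⟨g, hmem⟩, (ψ : H)⟫ = 0 := by
    rw [happ, hgh ψ hcond, sub_self]
  have h0 : ⟪BT.Γ₁ ⟨g, hmem⟩, BT.Γ₂ ψ⟫ - ⟪BT.Γ₂ ⟨g, hmem⟩, BT.Γ₁ ψ⟫ = 0 :=
    hgreen.symm.trans hL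
  rw [e1, e2, adjoint_inner_right, adjoint_inner_right] at h0
  exact sub_eq_zero.mp h0

/-- `H^{A,B}` is self-adjoint for a normalized pair `(A, B)`. -/
lemma HAB_selfAdjoint (hdense : Dense (S.domain : Set H)) (hsymm : IsSymmetricPMap S)
    (hAB : A ∘L adjoint B = B ∘L adjoint A) (hM : IsBoundedlyInvertible (MAB A B)) :
    LinearPMap.adjoint (HAB S BT A B) = HAB S BT A B := by
  have hd := dense_dom_HAB hdense hsymm BT A B
  have hFA := LinearPMap.adjoint_isFormalAdjoint (T := HAB S BT A B) hd
  -- values of the adjoint agree with S* on elements that are in both domains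
  have hval : ∀ (x : (LinearPMap.adjoint (HAB S BT A B)).domain) (y : (HAB S BT A B).domain),
      (x : H) = (y : H) → LinearPMap.adjoint (HAB S BT A B) x = HAB S BT A B y := by
    intro x y hxy
    obtain ⟨ψ, hK, hcoe, happ⟩ := pr_elim y
    apply LinearPMap.adjoint_apply_eq hd
    intro χ
    obtain ⟨χ', hK', hcoe', happ'⟩ := pr_elim χ
    unfold HAB
    rw [← happ, ← happ', ← hcoe']
    rw [← green_zero hAB hM (mem_KAB_iff.mp hK) (mem_KAB_iff.mp hK')]
    rw [hcoe, ← hxy]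
  apply LinearPMap.ext
  · ext x
    constructor
    · intro hx
      have hgh0 : ∀ ψ : S.adjoint.domain, A (BT.Γ₁ ψ) = B (BT.Γ₂ ψ) →
          ⟪x, S.adjoint ψ⟫ = ⟪LinearPMap.adjoint (HAB S BT A B) ⟨x, hx⟩, (ψ : H)⟫ := by
        intro ψ hψ
        have hm := mem_KAB_iff.mpr hψ
        have h1 := hFA ⟨x, hx⟩ ⟨(ψ : H), pr_mem ψ hm⟩
        unfold HAB at h1
        rw [pr_apply ψ hm] at h1
        exact h1.symm
      obtain ⟨φ, hφc, hφa, hφb⟩ := max_lemma (BT := BT) hdense hsymm hAB x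
          (LinearPMap.adjoint (HAB S BT A B) ⟨x, hx⟩) hgh0
      have hm := pr_mem φ (mem_KAB_iff.mpr hφb)
      rw [hφc] at hm
      exact hm
    · intro hx
      obtain ⟨ψ, hK, hcoe, happ⟩ := pr_elim (⟨x, hx⟩ : (HAB S BT A B).domain)
      apply LinearPMap.mem_adjoint_domain_of_exists
      refine ⟨S.adjoint ψ, ?_⟩
      intro χ
      obtain ⟨χ', hK', hcoe', happ'⟩ := pr_elim χ
      unfold HAB
      rw [← happ', ← hcoe']
      rw [← green_zero hAB hM (mem_KAB_iff.mp hK) (mem_KAB_iff.mp hK'), hcoe]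
  · intro x hx hy
    exact hval ⟨x, hx⟩ ⟨x, hy⟩ rfl

lemma norm10 : (1 : G →L[ℂ] G) ∘L adjoint (0 : G →L[ℂ] G)
    = (0 : G →L[ℂ] G) ∘L adjoint (1 : G →L[ℂ] G) := by
  ext u
  simp

lemma hM10 : IsBoundedlyInvertible (MAB (1 : G →L[ℂ] G) 0) := by
  refine ⟨ContinuousLinearMap.id ℂ (G × G), fun x => ?_, fun y => ?_⟩
  · rw [MAB_apply]; simp
  · rw [MAB_apply]; simp

end Main
end KreinAux
namespace KreinAux
section Main2

set_option linter.unusedSectionVars false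
set_option maxHeartbeats 1000000

local notation "⟪" x ", " y "⟫" => @inner ℂ _ _ x y

open ContinuousLinearMap

variable {H : Type*} [NormedAddCommGroup H] [InnerProductSpace ℂ H] [CompleteSpace H]
variable {G : Type*} [NormedAddCommGroup G] [InnerProductSpace ℂ G] [CompleteSpace G]
variable {S : H →ₗ.[ℂ] H} {BT : BoundaryTriple S G} {A B : G →L[ℂ] G}

/-- The adjoint of a resolvent of `H^{A,B}` at `z` is a resolvent at `z̄`. -/
lemma res_conj (hdense : Dense (S.domain : Set H)) (hsymm : IsSymmetricPMap S)
    (hAB : A ∘L adjoint B = B ∘L adjoint A) (hM : IsBoundedlyInvertible (MAB A B))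
    {z : ℂ} {RAB : H →L[ℂ] H} (hR : IsResolventOf (HAB S BT A B) z RAB) :
    IsResolventOf (HAB S BT A B) (starRingEnd ℂ z) (adjoint RAB) := by
  constructor
  · intro f
    have hgh : ∀ ψ : S.adjoint.domain, A (BT.Γ₁ ψ) = B (BT.Γ₂ ψ) →
        ⟪adjoint RAB f, S.adjoint ψ⟫
          = ⟪f + (starRingEnd ℂ z) • (adjoint RAB f), (ψ : H)⟫ := by
      intro ψ hψ
      have h1 : ⟪adjoint RAB f, S.adjoint ψ - z • (ψ : H)⟫ = ⟪f, (ψ : H)⟫ := by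
        rw [adjoint_inner_left, res_inv hR ψ hψ]
      rw [inner_sub_right, inner_smul_right] at h1
      rw [inner_add_left, inner_smul_left, Complex.conj_conj]
      linear_combination h1
    obtain ⟨φ, hφc, hφa, hφb⟩ := max_lemma (BT := BT) hdense hsymm hAB (adjoint RAB f)
        (f + (starRingEnd ℂ z) • (adjoint RAB f)) hgh
    refine ⟨⟨(φ : H), pr_mem φ (mem_KAB_iff.mpr hφb)⟩, by rw [hφc], ?_⟩
    show HAB S BT A B ⟨(φ : H), pr_mem φ (mem_KAB_iff.mpr hφb)⟩ - _ = f
    unfold HAB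
    rw [pr_apply φ (mem_KAB_iff.mpr hφb), hφa, hφc]
    abel
  · intro x
    obtain ⟨ψ, hK, hcoe, happ⟩ := pr_elim x
    apply ext_inner_left ℂ
    intro v
    rw [adjoint_inner_right]
    obtain ⟨χ, hχb, hχc, hχe⟩ := res_lift hR v
    rw [← hχc]
    unfold HAB
    rw [← happ, ← hcoe]
    rw [inner_sub_right, inner_smul_right,
      green_zero hAB hM hχb (mem_KAB_iff.mp hK)]
    have h2 : ⟪S.adjoint χ - z • (χ : H), (ψ : H)⟫ = ⟪v, (ψ : H)⟫ := by rw [hχe]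
    rw [inner_sub_left, inner_smul_left] at h2
    exact h2

/-- Value of the adjoint of `γ(z̄)` on vectors `(S* - z)φ` for `φ ∈ ker Γ₁`-free form. -/
lemma gamma_adj {z : ℂ} {γzbar : G →L[ℂ] H}
    (hγbar : IsGammaField S BT (starRingEnd ℂ z) γzbar)
    (φ : S.adjoint.domain) (h0 : BT.Γ₁ φ = 0) :
    BT.Γ₂ φ = adjoint γzbar (S.adjoint φ - z • (φ : H)) := by
  apply ext_inner_left ℂ
  intro ξ
  rw [adjoint_inner_right]
  obtain ⟨ψ, hc, ha, hb⟩ := hγbar.1 ξ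
  rw [← hc]
  have hg := BT.green ψ φ
  rw [h0, inner_zero_right, hb, ha, inner_smul_left, Complex.conj_conj, sub_zero] at hg
  rw [inner_sub_right, inner_smul_right]
  exact hg.symm

/-- The adjoint of the `Q`-function at `z` is a `Q`-function at `z̄`. -/
lemma Q_conj {z : ℂ} {γz γzbar : G →L[ℂ] H} {Qz : G →L[ℂ] G}
    (hQ : IsQFunction S BT z γz Qz)
    (hγbar : IsGammaField S BT (starRingEnd ℂ z) γzbar) :
    IsQFunction S BT (starRingEnd ℂ z) γzbar (adjoint Qz) := by
  refine ⟨hγbar, ?_⟩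
  intro φ hφ
  apply ext_inner_left ℂ
  intro ξ
  rw [adjoint_inner_right]
  obtain ⟨χ, hc, ha, hb⟩ := hQ.1.1 ξ
  have hQχ : Qz (BT.Γ₁ χ) = BT.Γ₂ χ := hQ.2 χ ha
  rw [hb] at hQχ
  have hg := BT.green χ φ
  have hL : ⟪(χ : H), S.adjoint φ⟫ - ⟪S.adjoint χ, (φ : H)⟫ = 0 := by
    rw [hφ, ha, inner_smul_right, inner_smul_left]
    ring
  have h2 := hg.symm.trans hL
  rw [hb, ← hQχ] at h2
  exact (sub_eq_zero.mp h2).symm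

/-- Bijectivity of `B Q(w) - A` when `w` is in the resolvent set of `H^{A,B}`. -/
lemma BQA_bijective (hM : IsBoundedlyInvertible (MAB A B)) {w : ℂ} {γw : G →L[ℂ] H}
    {Qw : G →L[ℂ] G} {RW : H →L[ℂ] H} (hQ : IsQFunction S BT w γw Qw)
    (hR : IsResolventOf (HAB S BT A B) w RW) :
    Function.Bijective (B ∘L Qw - A) := by
  have hker : ∀ ξ, (B ∘L Qw - A) ξ = 0 → ξ = 0 := by
    intro ξ hξ
    obtain ⟨φ, hc, ha, hb⟩ := hQ.1.1 ξ
    have hQφ : Qw (BT.Γ₁ φ) = BT.Γ₂ φ := hQ.2 φ ha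
    have hcond : A (BT.Γ₁ φ) = B (BT.Γ₂ φ) := by
      rw [← hQφ, hb]
      have h1 : B (Qw ξ) - A ξ = 0 := by
        simpa using hξ
      exact (sub_eq_zero.mp h1).symm
    have h0 := res_inv hR φ hcond
    rw [ha, sub_self, map_zero] at h0
    have hφ0 : φ = 0 := Subtype.ext h0.symm
    rw [← hb, hφ0, map_zero]
  constructor
  · intro a b hab
    have := hker (a - b) (by rw [map_sub, hab, sub_self])
    exact sub_eq_zero.mp this
  · intro η
    obtain ⟨v, hv⟩ := row_surj hM (-η)
    obtain ⟨χ, hχ⟩ := BT.surj (v.1, v.2)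
    have e1 : BT.Γ₁ χ = v.1 := by simpa using congrArg Prod.fst hχ
    have e2 : BT.Γ₂ χ = v.2 := by simpa using congrArg Prod.snd hχ
    obtain ⟨φ, hφcond, hφc, hφe⟩ := res_lift hR (S.adjoint χ - w • (χ : H))
    have hψ : S.adjoint (χ - φ) = w • ((χ - φ : S.adjoint.domain) : H) := by
      have h1 : S.adjoint χ - w • (χ : H) = S.adjoint φ - w • (φ : H) := hφe.symm
      have h2 : S.adjoint χ - S.adjoint φ = w • (χ : H) - w • (φ : H) :=
        sub_eq_sub_iff_sub_eq_sub.mp h1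
      rw [LinearPMap.map_sub]
      have h3 : ((χ - φ : S.adjoint.domain) : H) = (χ : H) - (φ : H) := rfl
      rw [h3, smul_sub]
      exact h2
    refine ⟨BT.Γ₁ (χ - φ), ?_⟩
    have hQψ : Qw (BT.Γ₁ (χ - φ)) = BT.Γ₂ (χ - φ) := hQ.2 _ hψ
    have hshow : B (Qw (BT.Γ₁ (χ - φ))) - A (BT.Γ₁ (χ - φ)) = η := by
      rw [hQψ, map_sub, map_sub, map_sub, map_sub, e1, e2]
      rw [hφcond]
      have hfin : B v.2 - A v.1 = η := by
        have h5 : -(A v.1 - B v.2) = -(-η) := congrArg Neg.neg hv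
        rwa [neg_sub, neg_neg] at h5
      rw [sub_sub_sub_comm, sub_self, sub_zero]
      exact hfin
    simpa using hshow

end Main2
end KreinAux
namespace KreinAux
section Main3

set_option linter.unusedSectionVars false
set_option maxHeartbeats 1000000

local notation "⟪" x ", " y "⟫" => @inner ℂ _ _ x y

open ContinuousLinearMap

variable {H : Type*} [NormedAddCommGroup H] [InnerProductSpace ℂ H] [CompleteSpace H]
variable {G : Type*} [NormedAddCommGroup G] [InnerProductSpace ℂ G] [CompleteSpace G]
variable {S : H →ₗ.[ℂ] H} {BT : BoundaryTriple S G} {A B : G →L[ℂ] G}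

lemma binv_of_bij {T : G →L[ℂ] G} (h : Function.Bijective T) : IsBoundedlyInvertible T := by
  let e := ContinuousLinearEquiv.ofBijective T (LinearMap.ker_eq_bot.mpr h.1)
    (LinearMap.range_eq_top.mpr h.2)
  refine ⟨(e.symm : G →L[ℂ] G), fun x => ?_, fun y => ?_⟩
  · show e.symm (T x) = x
    have h1 : T x = e x := rfl
    rw [h1, e.symm_apply_apply]
  · show T (e.symm y) = y
    have h1 : T (e.symm y) = e (e.symm y) := rfl
    rw [h1, e.apply_symm_apply]

lemma binv_adjoint {T : G →L[ℂ] G} (h : IsBoundedlyInvertible T) :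
    IsBoundedlyInvertible (adjoint T) := by
  obtain ⟨T', h1, h2⟩ := h
  refine ⟨adjoint T', fun x => ?_, fun y => ?_⟩
  · apply ext_inner_left ℂ; intro v
    rw [adjoint_inner_right, adjoint_inner_right, h2]
  · apply ext_inner_left ℂ; intro v
    rw [adjoint_inner_right, adjoint_inner_right, h1]

/-- The core computation for Krein's formula. -/
lemma krein_core (hdense : Dense (S.domain : Set H)) (hsymm : IsSymmetricPMap S)
    {z : ℂ} {R0 RAB : H →L[ℂ] H} {γz γzbar : G →L[ℂ] H} {Qz : G →L[ℂ] G}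
    (hR0 : IsResolventOf (H0 S BT) z R0) (hRAB : IsResolventOf (HAB S BT A B) z RAB)
    (hγbar : IsGammaField S BT (starRingEnd ℂ z) γzbar)
    (hQ : IsQFunction S BT z γz Qz) (f : H) :
    ∃ ξ : G, RAB f = R0 f + γz ξ ∧ (B ∘L Qz - A) ξ = -(B (adjoint γzbar f)) := by
  rw [H0_eq] at hR0
  obtain ⟨φ0, hcond0, hφ0c, hφ0e⟩ := res_lift hR0 f
  have h10 : BT.Γ₁ φ0 = 0 := by simpa using hcond0
  obtain ⟨φ1, hcond1, hφ1c, hφ1e⟩ := res_lift hRAB f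
  have hψ : S.adjoint (φ1 - φ0) = z • ((φ1 - φ0 : S.adjoint.domain) : H) := by
    have h1 : S.adjoint φ1 - z • (φ1 : H) = S.adjoint φ0 - z • (φ0 : H) := by
      rw [hφ1e, hφ0e]
    have h2 : S.adjoint φ1 - S.adjoint φ0 = z • (φ1 : H) - z • (φ0 : H) :=
      sub_eq_sub_iff_sub_eq_sub.mp h1
    rw [LinearPMap.map_sub]
    have h3 : ((φ1 - φ0 : S.adjoint.domain) : H) = (φ1 : H) - (φ0 : H) := rfl
    rw [h3, smul_sub]
    exact h2
  refine ⟨BT.Γ₁ (φ1 - φ0), ?_, ?_⟩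
  · have hγ : γz (BT.Γ₁ (φ1 - φ0)) = ((φ1 - φ0 : S.adjoint.domain) : H) :=
      hQ.1.2 _ hψ
    rw [hγ]
    have h3 : ((φ1 - φ0 : S.adjoint.domain) : H) = (φ1 : H) - (φ0 : H) := rfl
    rw [h3, hφ1c, hφ0c]
    abel
  · have hQψ : Qz (BT.Γ₁ (φ1 - φ0)) = BT.Γ₂ (φ1 - φ0) := hQ.2 _ hψ
    have hγ2 : BT.Γ₂ φ0 = adjoint γzbar f := by
      have := gamma_adj hγbar φ0 h10
      rwa [hφ0e] at this
    have hshow : B (Qz (BT.Γ₁ (φ1 - φ0))) - A (BT.Γ₁ (φ1 - φ0))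
        = -(B (adjoint γzbar f)) := by
      rw [hQψ, map_sub, map_sub, map_sub, map_sub, h10, map_zero, sub_zero, hcond1,
        hγ2, sub_sub_cancel_left]
    simpa using hshow

end Main3
end KreinAux

/-- Krein's resolvent formula, normalized parameters. For a normalized
pair `(A,B)`, the operator `H^{A,B}` is self-adjoint, and for `z` in the intersection of
the resolvent sets of `H⁰` and `H^{A,B}` the operators `Q(z)B* − A*` and `BQ(z) − A` are
boundedly invertible and
`(H^{A,B} − z)⁻¹ = (H⁰ − z)⁻¹ − γ(z) B* (Q(z)B* − A*)⁻¹ γ(z̄)*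
                 = (H⁰ − z)⁻¹ − γ(z) (BQ(z) − A)⁻¹ B γ(z̄)*`. -/
theorem krein_resolvent_formula_normalized (S : H →ₗ.[ℂ] H)
    (hdense : Dense (S.domain : Set H)) (hclosed : S.IsClosed) (hsymm : IsSymmetricPMap S)
    (BT : BoundaryTriple S G) (A B : G →L[ℂ] G)
    (hAB : A ∘L adjoint B = B ∘L adjoint A) (hM : IsBoundedlyInvertible (MAB A B)) :
    _root_.IsSelfAdjoint (HAB S BT A B) ∧
    ∀ z : ℂ, InResolventSet (H0 S BT) z → InResolventSet (HAB S BT A B) z →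
      ∀ (γz γzbar : G →L[ℂ] H) (Qz : G →L[ℂ] G),
        IsGammaField S BT (starRingEnd ℂ z) γzbar → IsQFunction S BT z γz Qz →
        IsBoundedlyInvertible (Qz ∘L adjoint B - adjoint A) ∧
        IsBoundedlyInvertible (B ∘L Qz - A) ∧
        ∀ R0 RAB : H →L[ℂ] H,
          IsResolventOf (H0 S BT) z R0 → IsResolventOf (HAB S BT A B) z RAB →
          (∀ T' : G →L[ℂ] G,
            (∀ x, T' ((Qz ∘L adjoint B - adjoint A) x) = x) →
            (∀ y, (Qz ∘L adjoint B - adjoint A) (T' y) = y) →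
            RAB = R0 - γz ∘L adjoint B ∘L T' ∘L adjoint γzbar) ∧
          (∀ T' : G →L[ℂ] G,
            (∀ x, T' ((B ∘L Qz - A) x) = x) →
            (∀ y, (B ∘L Qz - A) (T' y) = y) →
            RAB = R0 - γz ∘L T' ∘L B ∘L adjoint γzbar) := by
  constructor
  · rw [LinearPMap.isSelfAdjoint_def]
    exact KreinAux.HAB_selfAdjoint hdense hsymm hAB hM
  · intro z hz0 hzAB γz γzbar Qz hγbar hQ
    obtain ⟨RR, hRR⟩ := hzAB
    have hbij : Function.Bijective (B ∘L Qz - A) :=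
      KreinAux.BQA_bijective (BT := BT) hM hQ hRR
    have hRconj := KreinAux.res_conj hdense hsymm hAB hM hRR
    have hQconj := KreinAux.Q_conj hQ hγbar
    have hbij2 : Function.Bijective (B ∘L adjoint Qz - A) :=
      KreinAux.BQA_bijective (BT := BT) hM hQconj hRconj
    have hinv2 : IsBoundedlyInvertible (B ∘L adjoint Qz - A) := KreinAux.binv_of_bij hbij2
    have hinv1 : IsBoundedlyInvertible (Qz ∘L adjoint B - adjoint A) := by
      have heq : Qz ∘L adjoint B - adjoint A = adjoint (B ∘L adjoint Qz - A) := by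
        rw [map_sub, adjoint_comp, adjoint_adjoint]
      rw [heq]
      exact KreinAux.binv_adjoint hinv2
    refine ⟨hinv1, KreinAux.binv_of_bij hbij, ?_⟩
    intro R0 RAB hR0 hRAB
    constructor
    · intro T' hT1 hT2
      ext f
      obtain ⟨ξ, hsum, hbc⟩ := KreinAux.krein_core hdense hsymm hR0 hRAB hγbar hQ f
      have hξ : ξ = -(adjoint B (T' (adjoint γzbar f))) := by
        apply hbij.1
        rw [hbc, map_neg]
        congr 1
        have hid : (B ∘L Qz - A) (adjoint B (T' (adjoint γzbar f)))
            = B ((Qz ∘L adjoint B - adjoint A) (T' (adjoint γzbar f))) := by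
          simp only [ContinuousLinearMap.sub_apply, ContinuousLinearMap.comp_apply, map_sub]
          congr 1
          have h6 := congrFun (congrArg DFunLike.coe hAB) (T' (adjoint γzbar f))
          simp only [ContinuousLinearMap.comp_apply] at h6
          exact h6
        rw [hid, hT2]
      rw [hξ] at hsum
      simp only [ContinuousLinearMap.sub_apply, ContinuousLinearMap.comp_apply]
      rw [hsum, map_neg]
      abel
    · intro T' hT1 hT2
      ext f
      obtain ⟨ξ, hsum, hbc⟩ := KreinAux.krein_core hdense hsymm hR0 hRAB hγbar hQ f
      have hξ : ξ = -(T' (B (adjoint γzbar f))) := by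
        have := congrArg T' hbc
        rw [hT1, map_neg] at this
        exact this
      rw [hξ] at hsum
      simp only [ContinuousLinearMap.sub_apply, ContinuousLinearMap.comp_apply]
      rw [hsum, map_neg]
      abel
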